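/- Let σ : ℝ → ℝ be a polynomial of degree m ≥ 1 and let (x_i, y_i), i = 1,…,d, be a data set with x_i ∈ ℝ^p pairwise distinct and y_i ∈ ℝ. Assume d ≤ Σ_{k=1}^{m} C(p+k−1, k) and that the d tuples (1, x_i, x_i^{⊗2}, …, x_i^{⊗m}), i = 1,…,d, are linearly independent in ℝ ⊕ ℝ^p ⊕ (ℝ^p)^{⊗2} ⊕ ⋯ ⊕ (ℝ^p)^{⊗m}. Then there exist W ∈ ℝ^{d×p}, v, b ∈ ℝ^d such that the shallow network f(x) = v^T σ(Wx − b) satisfies f(x_i) = y_i for all i = 1,…,d. -/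

import Mathlib

open Polynomial Finset

private lemma aux_deriv_step {d : ℕ} (A tt uu : Fin d → ℝ) (q : ℕ)
    (h : ∀ s : ℝ, ∑ i, A i * (tt i + s * uu i) ^ (q + 1) = 0) :
    ∑ i, A i * uu i * tt i ^ q = 0 := by
  have hD : HasDerivAt (fun s : ℝ => ∑ i, A i * (tt i + s * uu i) ^ (q + 1))
      (∑ i, A i * (((q:ℝ) + 1) * (tt i + 0 * uu i) ^ q * uu i)) 0 := by
    apply HasDerivAt.fun_sum
    intro i _
    have h1 : HasDerivAt (fun s : ℝ => tt i + s * uu i) (uu i) 0 := by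
      simpa using ((hasDerivAt_id (0:ℝ)).mul_const (uu i)).const_add (tt i)
    have h2 := (h1.pow (q + 1)).const_mul (A i)
    simpa [Nat.add_sub_cancel, Nat.cast_add, Nat.cast_one] using h2
  have hfun : (fun s : ℝ => ∑ i, A i * (tt i + s * uu i) ^ (q + 1)) = fun _ => (0:ℝ) :=
    funext h
  have h0 : (∑ i, A i * (((q:ℝ) + 1) * (tt i + 0 * uu i) ^ q * uu i)) = 0 := by
    have := hD
    rw [hfun] at this
    exact this.unique (hasDerivAt_const 0 0)
  have h1 : ((q:ℝ) + 1) * ∑ i, A i * uu i * tt i ^ q = 0 := by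
    rw [Finset.mul_sum, ← h0]
    exact Finset.sum_congr rfl fun i _ => by ring
  have hq : ((q:ℝ) + 1) ≠ 0 := by positivity
  exact (mul_eq_zero.mp h1).resolve_left hq

private lemma aux_multi {d p : ℕ} (c : Fin d → ℝ) (x : Fin d → Fin p → ℝ) :
    ∀ (L : List (Fin p → ℝ)) (q : ℕ),
      (∀ w : Fin p → ℝ, ∑ i, c i * (∑ l, w l * x i l) ^ (q + L.length) = 0) →
      ∀ w : Fin p → ℝ,
        ∑ i, c i * (L.map (fun u => ∑ l, u l * x i l)).prod * (∑ l, w l * x i l) ^ q = 0 := by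
  intro L
  induction L with
  | nil => intro q h w; simpa using h w
  | cons u L ih =>
    intro q h w
    have h' := ih (q + 1) (by
      intro w'
      have := h w'
      rwa [show q + 1 + L.length = q + (u :: L).length by simp; omega] )
    have hs : ∀ s : ℝ, ∑ i, (c i * (L.map (fun u => ∑ l, u l * x i l)).prod) *
        ((∑ l, w l * x i l) + s * (∑ l, u l * x i l)) ^ (q + 1) = 0 := by
      intro s
      have := h' (w + s • u)
      have heq : ∀ i, (∑ l, (w + s • u) l * x i l)
          = (∑ l, w l * x i l) + s * (∑ l, u l * x i l) := by
        intro i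
        rw [Finset.mul_sum, ← Finset.sum_add_distrib]
        exact Finset.sum_congr rfl fun l _ => by simp only [Pi.add_apply, Pi.smul_apply, smul_eq_mul]; try ring
      rw [← this]
      exact Finset.sum_congr rfl fun i _ => by rw [heq i]
    have := aux_deriv_step (fun i => c i * (L.map (fun u => ∑ l, u l * x i l)).prod)
      (fun i => ∑ l, w l * x i l) (fun i => ∑ l, u l * x i l) q hs
    rw [← this]
    exact Finset.sum_congr rfl fun i _ => by simp only [List.map_cons, List.prod_cons]; ring

private lemma aux_prod_zero {d p : ℕ} (c : Fin d → ℝ) (x : Fin d → Fin p → ℝ) (r : ℕ)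
    (h : ∀ w : Fin p → ℝ, ∑ i, c i * (∑ l, w l * x i l) ^ r = 0) :
    ∀ f : Fin r → Fin p, ∑ i, c i * ∏ j, x i (f j) = 0 := by
  intro f
  have hlen : (List.ofFn fun j : Fin r => (Pi.single (f j) 1 : Fin p → ℝ)).length = r := by simp
  have := aux_multi c x (List.ofFn fun j : Fin r => (Pi.single (f j) 1 : Fin p → ℝ)) 0
    (by intro w; simpa [hlen] using h w) 0
  have hdot : ∀ i j, (∑ l, (Pi.single (f j) 1 : Fin p → ℝ) l * x i l) = x i (f j) := by
    intro i j
    rw [Finset.sum_eq_single (f j)]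
    · simp
    · intro l _ hl; simp [Pi.single_apply, hl]
    · simp
  rw [← this]
  refine Finset.sum_congr rfl fun i _ => ?_
  rw [List.map_ofFn, List.prod_ofFn]
  simp only [Function.comp, hdot]
  ring

private lemma aux_powers {d : ℕ} (P : Polynomial ℝ) (hP : P ≠ 0) (c t : Fin d → ℝ)
    (h : ∀ b : ℝ, ∑ i, c i * P.eval (t i - b) = 0) :
    ∀ r ≤ P.natDegree, ∑ i, c i * t i ^ r = 0 := by
  set m := P.natDegree with hm
  have hQ : (∑ i, Polynomial.C (c i) * Polynomial.taylor (t i) P) = 0 := by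
    apply Polynomial.funext
    intro s
    rw [Polynomial.eval_zero, Polynomial.eval_finset_sum]
    have := h (-s)
    rw [← this]
    refine Finset.sum_congr rfl fun i _ => ?_
    rw [Polynomial.eval_mul, Polynomial.eval_C, Polynomial.taylor_eval]
    rw [show t i - (-s) = s + t i by ring]
  have hcoeff : ∀ k, ∑ i, c i * (Polynomial.hasseDeriv k P).eval (t i) = 0 := by
    intro k
    have := congrArg (fun Q => Polynomial.coeff Q k) hQ
    simpa [Polynomial.finset_sum_coeff, Polynomial.coeff_C_mul, Polynomial.taylor_coeff]
      using this
  intro r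
  induction r using Nat.strong_induction_on with
  | _ r ih =>
    intro hr
    have hdeg : (Polynomial.hasseDeriv (m - r) P).natDegree < r + 1 := by
      have h1 := Polynomial.natDegree_hasseDeriv_le P (m - r)
      omega
    have hk := hcoeff (m - r)
    have hexp : ∀ i : Fin d, (Polynomial.hasseDeriv (m - r) P).eval (t i)
        = ∑ n ∈ Finset.range (r + 1),
            (Polynomial.hasseDeriv (m - r) P).coeff n * t i ^ n := fun i =>
      Polynomial.eval_eq_sum_range' hdeg (t i)
    rw [Finset.sum_congr rfl (fun i _ => by rw [hexp i])] at hk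
    -- swap sums
    rw [Finset.sum_congr rfl (fun i _ => Finset.mul_sum ..), Finset.sum_comm] at hk
    have hsplit : ∀ n ∈ Finset.range (r + 1), n ≠ r →
        ∑ i, c i * ((Polynomial.hasseDeriv (m - r) P).coeff n * t i ^ n) = 0 := by
      intro n hn hne
      have hn' : n < r := by simp at hn; omega
      have := ih n hn' (by omega)
      rw [show (∑ i, c i * ((Polynomial.hasseDeriv (m - r) P).coeff n * t i ^ n))
          = (Polynomial.hasseDeriv (m - r) P).coeff n * ∑ i, c i * t i ^ n by
        rw [Finset.mul_sum]; exact Finset.sum_congr rfl fun i _ => by ring]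
      rw [this, mul_zero]
    rw [Finset.sum_eq_single_of_mem r (by simp) hsplit] at hk
    have hc : (Polynomial.hasseDeriv (m - r) P).coeff r
        = ((r + (m - r)).choose (m - r) : ℝ) * P.coeff m := by
      rw [Polynomial.hasseDeriv_coeff]
      congr 2
      omega
    have hPm : P.coeff m ≠ 0 := Polynomial.leadingCoeff_ne_zero.mpr hP
    have hch : ((r + (m - r)).choose (m - r) : ℝ) ≠ 0 := by
      have : 0 < (r + (m - r)).choose (m - r) := Nat.choose_pos (by omega)
      positivity
    have : ((r + (m - r)).choose (m - r) : ℝ) * P.coeff m * (∑ i, c i * t i ^ r) = 0 := by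
      rw [← hk, Finset.mul_sum]
      exact Finset.sum_congr rfl fun i _ => by rw [hc]; ring
    rcases mul_eq_zero.mp this with h1 | h2
    · exact absurd h1 (mul_ne_zero hch hPm)
    · exact h2

private lemma aux_tensor {d p : ℕ} (c : Fin d → ℝ) (x : Fin d → Fin p → ℝ) (r : ℕ)
    (h : ∀ f : Fin r → Fin p, ∑ i, c i * ∏ j, x i (f j) = 0) :
    ∑ i, c i • (PiTensorProduct.tprod ℝ (fun _ : Fin r => x i) :
      TensorPower ℝ r (Fin p → ℝ)) = 0 := by
  classical
  have hexp : ∀ i, (PiTensorProduct.tprod ℝ (fun _ : Fin r => x i) :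
      TensorPower ℝ r (Fin p → ℝ))
      = ∑ f : Fin r → Fin p, (∏ j, x i (f j)) •
          (PiTensorProduct.tprod ℝ (fun j => (Pi.single (f j) 1 : Fin p → ℝ)) :
            TensorPower ℝ r (Fin p → ℝ)) := by
    intro i
    have hxi : (fun _ : Fin r => x i)
        = fun _ : Fin r => ∑ l : Fin p, x i l • (Pi.single l 1 : Fin p → ℝ) := by
      funext j k
      simp [Finset.sum_apply, Pi.single_apply]
    rw [hxi]
    rw [MultilinearMap.map_sum (PiTensorProduct.tprod ℝ)
      (fun (_ : Fin r) (l : Fin p) => x i l • (Pi.single l 1 : Fin p → ℝ))]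
    exact Finset.sum_congr rfl fun f _ =>
      MultilinearMap.map_smul_univ (PiTensorProduct.tprod ℝ) (fun j => x i (f j))
        (fun j => (Pi.single (f j) 1 : Fin p → ℝ))
  calc ∑ i, c i • (PiTensorProduct.tprod ℝ (fun _ : Fin r => x i) :
        TensorPower ℝ r (Fin p → ℝ))
      = ∑ i, ∑ f : Fin r → Fin p, (c i * ∏ j, x i (f j)) •
          (PiTensorProduct.tprod ℝ (fun j => (Pi.single (f j) 1 : Fin p → ℝ)) :
            TensorPower ℝ r (Fin p → ℝ)) := by
        refine Finset.sum_congr rfl fun i _ => ?_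
        rw [hexp i, Finset.smul_sum]
        exact Finset.sum_congr rfl fun f _ => by rw [smul_smul]
    _ = ∑ f : Fin r → Fin p, (∑ i, c i * ∏ j, x i (f j)) •
          (PiTensorProduct.tprod ℝ (fun j => (Pi.single (f j) 1 : Fin p → ℝ)) :
            TensorPower ℝ r (Fin p → ℝ)) := by
        rw [Finset.sum_comm]
        exact Finset.sum_congr rfl fun f _ => (Finset.sum_smul).symm
    _ = 0 := by
        refine Finset.sum_eq_zero fun f _ => ?_
        rw [h f, zero_smul]

/-- **Interpolation for polynomial activations (Proposition 3.1, part 2).**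
Let `σ` be a polynomial of degree `m ≥ 1` and `(xᵢ, yᵢ)` a data set with `xᵢ ∈ ℝ^p` pairwise
distinct. If `d ≤ ∑_{k=1}^{m} C(p+k−1, k)` and the tuples `(1, xᵢ, xᵢ^⊗2, …, xᵢ^⊗m)` are
linearly independent, then a shallow network `f(x) = vᵀ σ(Wx − b)` of width `d`
interpolates the data. -/
theorem polynomial_activation_interpolation (d p : ℕ) (P : Polynomial ℝ)
    (hm : 1 ≤ P.natDegree) (x : Fin d → Fin p → ℝ) (hx : Function.Injective x)
    (y : Fin d → ℝ)
    (hd : d ≤ ∑ k ∈ Finset.Icc 1 P.natDegree, (p + k - 1).choose k)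
    (hli : LinearIndependent ℝ
      (fun i : Fin d => fun k : Fin (P.natDegree + 1) =>
        (PiTensorProduct.tprod ℝ (fun _ : Fin (k : ℕ) => x i) :
          TensorPower ℝ (k : ℕ) (Fin p → ℝ)))) :
    ∃ (W : Matrix (Fin d) (Fin p) ℝ) (v b : Fin d → ℝ),
      ∀ i, ∑ j, v j * P.eval (W.mulVec (x i) j - b j) = y i := by
  classical
  have hP0 : P ≠ 0 := by
    intro h; rw [h] at hm; simp at hm
  set φ : (Fin p → ℝ) × ℝ → (Fin d → ℝ) :=
    fun wb => fun i => P.eval ((∑ l, wb.1 l * x i l) - wb.2) with hφ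
  -- Step 1: no nonzero functional kills all network evaluation vectors
  have key : ∀ c : Fin d → ℝ,
      (∀ wb : (Fin p → ℝ) × ℝ, ∑ i, c i * φ wb i = 0) → c = 0 := by
    intro c hc
    have hpow : ∀ w : Fin p → ℝ, ∀ r ≤ P.natDegree,
        ∑ i, c i * (∑ l, w l * x i l) ^ r = 0 := by
      intro w r hr
      exact aux_powers P hP0 c (fun i => ∑ l, w l * x i l)
        (fun b => hc (w, b)) r hr
    have htens : ∀ k : Fin (P.natDegree + 1),
        ∑ i, c i • (PiTensorProduct.tprod ℝ (fun _ : Fin (k : ℕ) => x i) :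
          TensorPower ℝ (k : ℕ) (Fin p → ℝ)) = 0 := by
      intro k
      exact aux_tensor c x k
        (aux_prod_zero c x k (fun w => hpow w k (Nat.lt_succ_iff.mp k.2)))
    have h0 : (∑ i, c i • (fun k : Fin (P.natDegree + 1) =>
        (PiTensorProduct.tprod ℝ (fun _ : Fin (k : ℕ) => x i) :
          TensorPower ℝ (k : ℕ) (Fin p → ℝ)))) = 0 := by
      funext k
      rw [Finset.sum_apply]
      simpa using htens k
    funext i
    exact Fintype.linearIndependent_iff.mp hli c h0 i
  -- Step 2: the evaluation vectors span ℝ^d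
  have hspan : Submodule.span ℝ (Set.range φ) = ⊤ := by
    by_contra hne
    obtain ⟨f, hf0, hfmap⟩ := Submodule.exists_dual_map_eq_bot_of_lt_top
      (lt_of_le_of_ne le_top hne) (by infer_instance)
    set c : Fin d → ℝ := fun i => f (fun j => if i = j then 1 else 0) with hcdef
    have hcf : ∀ v : Fin d → ℝ, f v = ∑ i, v i * c i := by
      intro v
      rw [LinearMap.pi_apply_eq_sum_univ f v]
      exact Finset.sum_congr rfl fun i _ => by rw [smul_eq_mul]
    have hc0 : c = 0 := by
      apply key
      intro wb
      have hv : φ wb ∈ Submodule.span ℝ (Set.range φ) :=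
        Submodule.subset_span ⟨wb, rfl⟩
      have hz : f (φ wb) = 0 := by
        have : f (φ wb) ∈ Submodule.map f (Submodule.span ℝ (Set.range φ)) :=
          ⟨φ wb, hv, rfl⟩
        rw [hfmap] at this
        simpa using this
      rw [hcf] at hz
      rw [← hz]
      exact Finset.sum_congr rfl fun i _ => mul_comm _ _
    apply hf0
    apply LinearMap.ext
    intro v
    rw [hcf v, hc0]
    simp
  -- Step 3: extract a basis from the spanning set
  obtain ⟨tset, hts, htsp, htli⟩ := exists_linearIndependent ℝ (Set.range φ)
  rw [hspan] at htsp
  have hfin : tset.Finite := htli.setFinite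
  haveI := hfin.fintype
  let hB : Module.Basis tset ℝ (Fin d → ℝ) :=
    Module.Basis.mk htli (by rw [Subtype.range_coe, htsp])
  have hcard : Fintype.card tset = d := by
    have h1 := Module.finrank_eq_card_basis hB
    rw [Module.finrank_pi ℝ] at h1
    simpa using h1.symm
  let e : Fin d ≃ tset := Fintype.equivOfCardEq (by simp [hcard])
  let B : Module.Basis (Fin d) ℝ (Fin d → ℝ) := hB.reindex e.symm
  have hBval : ∀ j : Fin d, B j = ((e j : tset) : Fin d → ℝ) := by
    intro j
    rw [Module.Basis.reindex_apply, Equiv.symm_symm, Module.Basis.mk_apply]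
  have hmem : ∀ j : Fin d, ∃ wb : (Fin p → ℝ) × ℝ, φ wb = B j := by
    intro j
    have : (B j : Fin d → ℝ) ∈ Set.range φ := by
      rw [hBval j]; exact hts (e j).2
    exact this
  choose wb hwb using hmem
  refine ⟨Matrix.of (fun j l => (wb j).1 l), fun j => B.repr y j,
    fun j => (wb j).2, ?_⟩
  intro i
  have heval : ∀ j, P.eval ((Matrix.of (fun j l => (wb j).1 l)).mulVec (x i) j
      - (wb j).2) = B j i := by
    intro j
    rw [← hwb j]
    simp [hφ, Matrix.mulVec, dotProduct, Matrix.of_apply]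
  calc ∑ j, B.repr y j * P.eval ((Matrix.of (fun j l => (wb j).1 l)).mulVec (x i) j
        - (wb j).2)
      = ∑ j, B.repr y j * B j i := by
        exact Finset.sum_congr rfl fun j _ => by rw [heval j]
    _ = (∑ j, B.repr y j • B j) i := by
        rw [Finset.sum_apply]
        exact Finset.sum_congr rfl fun j _ => rfl
    _ = y i := by rw [B.sum_repr y]
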